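/- Let H be the n×n Hermitian matrix (n ≥ 3) defined by: H_{k,k+1} = e^{iη} and H_{k+1,k} = e^{-iη} for 1 ≤ k ≤ j, H_{k,k+1} = H_{k+1,k} = 1 for j+1 ≤ k ≤ n-1, H_{n,1} = H_{1,n} = 1 (indices mod n for the wrap-around arc, with the wrap-around entry being part of the undirected portion), and all other entries 0. Then det(H) = (-1)^{n+1}·2cos(ηj) + (-1)^{⌊n/2⌋}·(1+(-1)^n). -/

import Mathlib

open Complex Equiv Finset
open Fin.CommRing

private lemma prod_if_lt_aux {M : Type*} [CommMonoid M] (A : M) (j : ℕ) :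
    ∀ N : ℕ, ∏ k ∈ Finset.range N, (if k < j then A else 1) = A ^ (min j N) := by
  intro N
  induction N with
  | zero => simp
  | succ N ih =>
      rw [Finset.prod_range_succ, ih]
      by_cases h : N < j
      · rw [if_pos h, min_eq_right (by omega), min_eq_right (by omega), pow_succ]
      · rw [if_neg h, min_eq_left (by omega), min_eq_left (by omega), mul_one]

private lemma prod_if_lt {n j : ℕ} (hj : j ≤ n) {M : Type*} [CommMonoid M] (A : M) :
    (∏ i : Fin n, (if (i : ℕ) < j then A else 1)) = A ^ j := by
  rw [Fin.prod_univ_eq_prod_range (fun k => if k < j then A else 1) n,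
    prod_if_lt_aux, min_eq_left hj]

/-- Determinant of the η-Hermitian adjacency matrix of the mixed cycle `C_n^j`:
vertices are `0, …, n-1` (vertex `a` standing for `x_{a+1}`); the cycle edge from
vertex `a` to `a+1 (mod n)` carries entry `e^{iη}` (and conjugate on the reverse)
when it is one of the first `j` (directed) arcs, and entry `1` otherwise. -/
theorem stmt_2 (n j : ℕ) (hn : 3 ≤ n) (hj : j ≤ n) (η : ℝ)
    (H : Matrix (Fin n) (Fin n) ℂ)
    (hH : ∀ a b : Fin n, H a b =
      if (b : ℕ) = ((a : ℕ) + 1) % n then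
        (if (a : ℕ) < j then Complex.exp (η * Complex.I) else 1)
      else if (a : ℕ) = ((b : ℕ) + 1) % n then
        (if (b : ℕ) < j then Complex.exp (-(η : ℂ) * Complex.I) else 1)
      else 0) :
    H.det = (-1 : ℂ) ^ (n + 1) * 2 * (Real.cos (η * j) : ℂ)
      + (-1 : ℂ) ^ (n / 2) * (1 + (-1 : ℂ) ^ n) := by
  haveI : NeZero n := ⟨by omega⟩
  set ep := Complex.exp ((η : ℂ) * Complex.I) with hep
  set em := Complex.exp (-(η : ℂ) * Complex.I) with hem
  -- basic `Fin n` value facts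
  have hval0 : ((0 : Fin n) : ℕ) = 0 := rfl
  have hval1 : ((1 : Fin n) : ℕ) = 1 := by
    rw [Fin.val_one']; exact Nat.mod_eq_of_lt (by omega)
  have hval2 : ((2 : Fin n) : ℕ) = 2 := by
    rw [show (2 : Fin n) = ((2 : ℕ) : Fin n) by push_cast; ring, Fin.val_natCast]
    exact Nat.mod_eq_of_lt (by omega)
  have h20 : (2 : Fin n) ≠ 0 := by
    intro h
    have := congrArg Fin.val h
    rw [hval2, hval0] at this; omega
  have h10 : (1 : Fin n) ≠ 0 := by
    intro h
    have := congrArg Fin.val h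
    rw [hval1, hval0] at this; omega
  have hvalneg1 : ((-1 : Fin n) : ℕ) = n - 1 := by
    obtain ⟨m, rfl⟩ : ∃ m, n = m + 1 := ⟨n - 1, by omega⟩
    simp [Fin.coe_neg_one]
  have haddval : ∀ a : Fin n, ((a + 1 : Fin n) : ℕ) = ((a : ℕ) + 1) % n := by
    intro a; rw [Fin.val_add, hval1]
  have hsubval : ∀ a : Fin n, a ≠ 0 → ((a - 1 : Fin n) : ℕ) = (a : ℕ) - 1 := by
    obtain ⟨m, rfl⟩ : ∃ m, n = m + 1 := ⟨n - 1, by omega⟩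
    intro a ha; rw [Fin.coe_sub_one, if_neg ha]
  have hadj : ∀ a b : Fin n, ((b : ℕ) = ((a : ℕ) + 1) % n) ↔ b = a + 1 := by
    intro a b; rw [Fin.ext_iff, haddval]
  -- entry description with `Fin` arithmetic
  have hH' : ∀ a b : Fin n, H a b =
      if b = a + 1 then (if (a : ℕ) < j then ep else 1)
      else if a = b + 1 then (if (b : ℕ) < j then em else 1)
      else 0 := by
    intro a b
    rw [hH a b]
    simp only [hadj]
  have hx2 : ∀ x : Fin n, x + 2 ≠ x := by
    intro x h
    exact h20 (by rwa [add_eq_left] at h)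
  have hEdge1 : ∀ a : Fin n, H a (a + 1) = (if (a : ℕ) < j then ep else 1) := by
    intro a; rw [hH' a (a + 1), if_pos rfl]
  have hEdge2 : ∀ a : Fin n, H (a + 1) a = (if (a : ℕ) < j then em else 1) := by
    intro a
    rw [hH' (a + 1) a, if_neg, if_pos rfl]
    intro h
    exact hx2 a (by rw [show a + 2 = a + 1 + 1 by ring]; exact h.symm)
  have hzero : ∀ a b : Fin n, b ≠ a + 1 → a ≠ b + 1 → H a b = 0 := by
    intro a b h1 h2; rw [hH' a b, if_neg h1, if_neg h2]
  have hpair : ∀ a : Fin n, H (a + 1) a * H a (a + 1) = 1 := by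
    intro a
    rw [hEdge1, hEdge2]
    by_cases h : (a : ℕ) < j
    · rw [if_pos h, if_pos h, ← Complex.exp_add]
      norm_num
    · rw [if_neg h, if_neg h, mul_one]
  -- the rotation permutation
  set c : Equiv.Perm (Fin n) := Equiv.addRight 1 with hc
  have hc_app : ∀ a : Fin n, c a = a + 1 := fun a => rfl
  have hc_inv_app : ∀ a : Fin n, c⁻¹ a = a - 1 := by
    intro a
    apply c.injective
    rw [Equiv.Perm.inv_def, Equiv.apply_symm_apply, hc_app, sub_add_cancel]
  have hsign_c : ((Equiv.Perm.sign c : ℤ) : ℂ) = (-1 : ℂ) ^ (n + 1) := by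
    obtain ⟨m, hm⟩ : ∃ m, n = m + 1 := ⟨n - 1, by omega⟩
    subst hm
    have hcr : c = finRotate (m + 1) := Equiv.ext fun a => by
      rw [hc_app, finRotate_succ_apply]
    rw [hcr, sign_finRotate]
    push_cast
    rw [show m + 1 + 1 = m + 2 by ring, pow_add]
    norm_num
  -- determinant as a sum over permutations
  set f : Equiv.Perm (Fin n) → ℂ :=
    fun σ => ((Equiv.Perm.sign σ : ℤ) : ℂ) * ∏ i, H (σ i) i with hfdef
  have hfval : ∀ σ : Equiv.Perm (Fin n),
      f σ = ((Equiv.Perm.sign σ : ℤ) : ℂ) * ∏ i, H (σ i) i := fun σ => rfl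
  have hdet : H.det = ∑ σ : Equiv.Perm (Fin n), f σ := Matrix.det_apply' H
  -- permutations not of cyclic-adjacency type contribute zero
  have hvanish : ∀ σ : Equiv.Perm (Fin n),
      ¬(∀ i, σ i = i + 1 ∨ σ i = i - 1) → f σ = 0 := by
    intro σ hσ
    push_neg at hσ
    obtain ⟨i, h1, h2⟩ := hσ
    have hz : H (σ i) i = 0 := by
      apply hzero
      · intro h; exact h2 (eq_sub_iff_add_eq.mpr h.symm)
      · intro h; exact h1 h
    rw [hfval,
      Finset.prod_eq_zero (f := fun i => H (σ i) i) (Finset.mem_univ i) hz, mul_zero]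
  -- classification: positions with the same parity behave the same
  have hsame : ∀ σ : Equiv.Perm (Fin n), (∀ i, σ i = i + 1 ∨ σ i = i - 1) →
      ∀ a b : Fin n, ((a : ℕ) % 2 = (b : ℕ) % 2 ∨ Odd n) →
      (σ a = a + 1 ↔ σ b = b + 1) := by
    intro σ hgood
    have hstep2 : ∀ x : Fin n, (σ x = x + 1 ↔ σ (x + 2) = (x + 2) + 1) := by
      intro x
      constructor
      · intro hPx
        rcases hgood (x + 2) with h' | h'
        · exact h'
        · exfalso
          rw [show x + 2 - 1 = x + 1 by ring] at h'
          exact hx2 x (σ.injective (h'.trans hPx.symm))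
      · intro hP2
        rcases hgood x with h' | h'
        · exact h'
        · exfalso
          obtain ⟨b, hb⟩ := σ.surjective (x + 1)
          rcases hgood b with hb' | hb'
          · have hbx : b = x := add_right_cancel (hb'.symm.trans hb)
            subst hbx
            have heq : b - 1 = b + 1 := h'.symm.trans hb
            have : b + 2 = b := by
              rw [show b + 2 = b + 1 + 1 by ring, ← heq]; ring
            exact hx2 b this
          · have hbx : b = x + 2 := by
              have h3 : b - 1 = x + 1 := hb'.symm.trans hb
              rw [sub_eq_iff_eq_add.mp h3]; ring
            subst hbx
            have heq : (x + 2) + 1 = x + 1 := hP2.symm.trans hb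
            exact hx2 x (add_right_cancel heq)
    have hiter : ∀ k : ℕ, ∀ x : Fin n,
        (σ x = x + 1 ↔ σ (x + ((2 * k : ℕ) : Fin n)) = (x + ((2 * k : ℕ) : Fin n)) + 1) := by
      intro k
      induction k with
      | zero => intro x; norm_num
      | succ k ih =>
          intro x
          have hcast : ((2 * (k + 1) : ℕ) : Fin n) = ((2 * k : ℕ) : Fin n) + 2 := by
            push_cast; ring
          rw [hcast, ← add_assoc]
          exact (ih x).trans (hstep2 (x + ((2 * k : ℕ) : Fin n)))
    have hreach : ∀ a b : Fin n, ((a : ℕ) % 2 = (b : ℕ) % 2 ∨ Odd n) →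
        ∃ k : ℕ, b = a + ((2 * k : ℕ) : Fin n) := by
      intro a b h
      have ha' : (a : ℕ) < n := a.isLt
      have hb' : (b : ℕ) < n := b.isLt
      have key : ∀ d : ℕ, ((a : ℕ) + d = (b : ℕ) + n ∨ (a : ℕ) + d = (b : ℕ) + 2 * n) →
          b = a + ((d : ℕ) : Fin n) := by
        intro d hd
        rw [Fin.ext_iff, Fin.val_add, Fin.val_natCast, Nat.add_mod_mod]
        rcases hd with hd | hd
        · rw [hd, Nat.add_mod_right, Nat.mod_eq_of_lt hb']
        · rw [hd, Nat.add_mul_mod_self_right, Nat.mod_eq_of_lt hb']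
      rcases h with h | h
      · have hpar : 2 ∣ ((b : ℕ) + 2 * n - (a : ℕ)) := by omega
        obtain ⟨k, hk⟩ := hpar
        exact ⟨k, key (2 * k) (Or.inr (by omega))⟩
      · obtain ⟨t, ht⟩ := h
        by_cases hp : 2 ∣ ((b : ℕ) + 2 * n - (a : ℕ))
        · obtain ⟨k, hk⟩ := hp
          exact ⟨k, key (2 * k) (Or.inr (by omega))⟩
        · have hpar : 2 ∣ ((b : ℕ) + n - (a : ℕ)) := by omega
          obtain ⟨k, hk⟩ := hpar
          exact ⟨k, key (2 * k) (Or.inl (by omega))⟩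
    intro a b hab
    obtain ⟨k, rfl⟩ := hreach a b hab
    exact hiter k a
  -- products for the two rotations
  have hprodc : ∏ i, H (c i) i = em ^ j := by
    rw [Finset.prod_congr rfl (fun i _ => by rw [hc_app, hEdge2 i])]
    exact prod_if_lt hj em
  have hprodcinv : ∏ i, H (c⁻¹ i) i = ep ^ j := by
    have h1 : ∀ i : Fin n, H (c⁻¹ i) i
        = (fun a : Fin n => H a (a + 1)) ((Equiv.subRight (1 : Fin n)) i) := by
      intro i
      simp only [Equiv.subRight_apply]
      rw [hc_inv_app, sub_add_cancel]
    rw [Finset.prod_congr rfl (fun i _ => h1 i),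
      Equiv.prod_comp (Equiv.subRight (1 : Fin n)) (fun a : Fin n => H a (a + 1))]
    rw [Finset.prod_congr rfl (fun a _ => hEdge1 a)]
    exact prod_if_lt hj ep
  have hfc : f c = (-1 : ℂ) ^ (n + 1) * em ^ j := by
    rw [hfval, hprodc, hsign_c]
  have hfcinv : f c⁻¹ = (-1 : ℂ) ^ (n + 1) * ep ^ j := by
    rw [hfval, hprodcinv, Equiv.Perm.sign_inv, hsign_c]
  -- the cosine identity
  have hcos : ep ^ j + em ^ j = 2 * ((Real.cos (η * (j : ℝ))) : ℂ) := by
    rw [hep, hem, ← Complex.exp_nat_mul, ← Complex.exp_nat_mul, Complex.ofReal_cos]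
    push_cast
    rw [Complex.two_cos]
    ring_nf
  -- involution product is 1
  have hprodinv : ∀ σ : Equiv.Perm (Fin n), (∀ i, σ (σ i) = i) →
      (∀ i, σ i = i + 1 ∨ σ i = i - 1) → ∏ i, H (σ i) i = 1 := by
    intro σ h2 hgood
    apply Finset.prod_involution (g := fun i (_ : i ∈ Finset.univ) => σ i)
    · intro a _
      rcases hgood a with h | h
      · rw [h2 a, h]; exact hpair a
      · rw [h2 a, h]
        have h3 : (a - 1) + 1 = a := sub_add_cancel a 1
        calc H (a - 1) a * H a (a - 1) = H a (a - 1) * H (a - 1) a := mul_comm _ _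
          _ = H ((a - 1) + 1) (a - 1) * H (a - 1) ((a - 1) + 1) := by rw [h3]
          _ = 1 := hpair (a - 1)
    · intro a _ _
      rcases hgood a with h | h
      · rw [h]; intro hq; exact h10 (by rwa [add_eq_left] at hq)
      · rw [h]; intro hq; exact h10 (by rwa [sub_eq_self] at hq)
    · intro a _; exact Finset.mem_univ _
    · intro a _; exact h2 a
  -- distinctness helper
  have hdist : ∀ (σ τ : Equiv.Perm (Fin n)) (x : Fin n),
      ((σ x : Fin n) : ℕ) ≠ ((τ x : Fin n) : ℕ) → σ ≠ τ := by
    intro σ τ x hx h; exact hx (by rw [h])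
  rcases Nat.even_or_odd n with hne | hno
  · -- even case
    obtain ⟨q, hq⟩ := hne
    have hq2 : n / 2 = q := by omega
    -- parity-refined value lemmas
    have haddval' : ∀ a : Fin n, Even (a : ℕ) → ((a + 1 : Fin n) : ℕ) = (a : ℕ) + 1 := by
      intro a ha
      obtain ⟨t, ht⟩ := ha
      rw [haddval]
      exact Nat.mod_eq_of_lt (by have := a.isLt; omega)
    -- the two matchings
    have hm0inv : Function.Involutive
        (fun a : Fin n => if Even (a : ℕ) then a + 1 else a - 1) := by
      intro a
      by_cases ha : Even (a : ℕ)
      · simp only [if_pos ha]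
        have hv : ((a + 1 : Fin n) : ℕ) = (a : ℕ) + 1 := haddval' a ha
        have hodd : ¬ Even ((a + 1 : Fin n) : ℕ) := by
          rw [hv]; obtain ⟨t, ht⟩ := ha; intro ⟨s, hs⟩; omega
        rw [if_neg hodd]; ring
      · simp only [if_neg ha]
        have ha0 : a ≠ 0 := by
          intro h; apply ha; rw [h, hval0]; exact Even.zero
        have hanz : (a : ℕ) ≠ 0 := by
          intro h; exact ha0 (Fin.ext (by rw [h, hval0]))
        have hv : ((a - 1 : Fin n) : ℕ) = (a : ℕ) - 1 := hsubval a ha0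
        have hev : Even ((a - 1 : Fin n) : ℕ) := by
          rw [hv]
          rcases Nat.even_or_odd (a : ℕ) with h | h
          · exact absurd h ha
          · obtain ⟨t, ht⟩ := h; exact ⟨t, by omega⟩
        rw [if_pos hev]; ring
    have hm1inv : Function.Involutive
        (fun a : Fin n => if Even (a : ℕ) then a - 1 else a + 1) := by
      intro a
      by_cases ha : Even (a : ℕ)
      · simp only [if_pos ha]
        have hodd : ¬ Even ((a - 1 : Fin n) : ℕ) := by
          by_cases h0 : a = 0
          · rw [h0, show (0 : Fin n) - 1 = -1 by ring, hvalneg1]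
            intro ⟨s, hs⟩; omega
          · rw [hsubval a h0]
            have hanz : (a : ℕ) ≠ 0 := by
              intro h; exact h0 (Fin.ext (by rw [h, hval0]))
            obtain ⟨t, ht⟩ := ha; intro ⟨s, hs⟩; omega
        rw [if_neg hodd]; ring
      · simp only [if_neg ha]
        have hev : Even ((a + 1 : Fin n) : ℕ) := by
          rw [haddval]
          have hlt := a.isLt
          by_cases hl : (a : ℕ) + 1 < n
          · rw [Nat.mod_eq_of_lt hl]
            rcases Nat.even_or_odd (a : ℕ) with h | h
            · exact absurd h ha
            · obtain ⟨t, ht⟩ := h; exact ⟨t + 1, by omega⟩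
          · rw [show (a : ℕ) + 1 = n by omega, Nat.mod_self]; exact Even.zero
        rw [if_pos hev]; ring
    set m0 : Equiv.Perm (Fin n) := Function.Involutive.toPerm _ hm0inv with hm0def
    set m1 : Equiv.Perm (Fin n) := Function.Involutive.toPerm _ hm1inv with hm1def
    have hm0_app : ∀ a : Fin n, m0 a = if Even (a : ℕ) then a + 1 else a - 1 := fun a => rfl
    have hm1_app : ∀ a : Fin n, m1 a = if Even (a : ℕ) then a - 1 else a + 1 := fun a => rfl
    have hm0good : ∀ i : Fin n, m0 i = i + 1 ∨ m0 i = i - 1 := by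
      intro i; rw [hm0_app]; split
      · exact Or.inl rfl
      · exact Or.inr rfl
    have hm1good : ∀ i : Fin n, m1 i = i + 1 ∨ m1 i = i - 1 := by
      intro i; rw [hm1_app]; split
      · exact Or.inr rfl
      · exact Or.inl rfl
    -- the index equivalence for sign computations
    set E : Fin q × Fin 2 ≃ Fin n := finProdFinEquiv.trans (finCongr (by omega : q * 2 = n))
      with hEdef
    have hEval : ∀ x : Fin q × Fin 2, ((E x : Fin n) : ℕ) = (x.2 : ℕ) + 2 * (x.1 : ℕ) := by
      intro x; rfl
    have hstepE : ∀ k : Fin q, E (k, 1) = E (k, 0) + 1 := by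
      intro k
      have hk := k.isLt
      rw [Fin.ext_iff, haddval, hEval, hEval]
      simp only [Fin.val_one, Fin.val_zero]
      rw [Nat.mod_eq_of_lt (by omega)]
      omega
    set g : Equiv.Perm (Fin q × Fin 2) :=
      Equiv.prodCongrRight (fun _ : Fin q => Equiv.swap (0 : Fin 2) 1) with hgdef
    have hsigng : ((Equiv.Perm.sign g : ℤ) : ℂ) = (-1 : ℂ) ^ q := by
      rw [hgdef, Equiv.Perm.sign_prodCongrRight]
      simp [Equiv.Perm.sign_swap (by decide : (0 : Fin 2) ≠ 1)]
    have hsign_m0 : ((Equiv.Perm.sign m0 : ℤ) : ℂ) = (-1 : ℂ) ^ q := by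
      have hEg : ∀ x : Fin q × Fin 2, E (g x) = m0 (E x) := by
        rintro ⟨k, r⟩
        fin_cases r <;> simp only [Fin.mk_zero, Fin.mk_one]
        · simp only [hgdef, Equiv.prodCongrRight_apply, Equiv.swap_apply_left]
          rw [hm0_app, if_pos (by rw [hEval]; exact ⟨(k : ℕ), by simp [Fin.val_zero]; ring⟩)]
          exact hstepE k
        · simp only [hgdef, Equiv.prodCongrRight_apply, Equiv.swap_apply_right]
          rw [hm0_app, if_neg (by rw [hEval]; simp only [Fin.val_one]; intro ⟨s, hs⟩; omega)]
          rw [hstepE k]; ring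
      rw [← Equiv.Perm.sign_eq_sign_of_equiv g m0 E hEg]
      exact hsigng
    have hsign_m1 : ((Equiv.Perm.sign m1 : ℤ) : ℂ) = (-1 : ℂ) ^ q := by
      have hEg : ∀ x : Fin q × Fin 2, (E.trans (Equiv.addRight (1 : Fin n))) (g x)
          = m1 ((E.trans (Equiv.addRight (1 : Fin n))) x) := by
        rintro ⟨k, r⟩
        fin_cases r <;> simp only [Fin.mk_zero, Fin.mk_one]
        · simp only [hgdef, Equiv.prodCongrRight_apply, Equiv.swap_apply_left,
            Equiv.trans_apply, Equiv.coe_addRight]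
          have hodd : ¬ Even ((E (k, 0) + 1 : Fin n) : ℕ) := by
            rw [haddval, hEval]
            simp only [Fin.val_zero]
            have hk := k.isLt
            rw [Nat.mod_eq_of_lt (by omega)]
            intro ⟨s, hs⟩; omega
          rw [hm1_app, if_neg hodd, hstepE k]
        · simp only [hgdef, Equiv.prodCongrRight_apply, Equiv.swap_apply_right,
            Equiv.trans_apply, Equiv.coe_addRight]
          have hev : Even ((E (k, 1) + 1 : Fin n) : ℕ) := by
            rw [haddval, hEval]
            simp only [Fin.val_one]
            have hk := k.isLt
            by_cases hl : 1 + 2 * (k : ℕ) + 1 < n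
            · rw [Nat.mod_eq_of_lt hl]; exact ⟨(k : ℕ) + 1, by ring⟩
            · rw [show 1 + 2 * (k : ℕ) + 1 = n by omega, Nat.mod_self]; exact Even.zero
          rw [hm1_app, if_pos hev, hstepE k]; ring
      rw [← Equiv.Perm.sign_eq_sign_of_equiv g m1 _ hEg]
      exact hsigng
    have hfm0 : f m0 = (-1 : ℂ) ^ q := by
      rw [hfval, hprodinv m0 (fun i => hm0inv i) hm0good, mul_one, hsign_m0]
    have hfm1 : f m1 = (-1 : ℂ) ^ q := by
      rw [hfval, hprodinv m1 (fun i => hm1inv i) hm1good, mul_one, hsign_m1]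
    -- point values for distinctness
    have hc0 : c 0 = 1 := by rw [hc_app, zero_add]
    have hcinv0 : c⁻¹ 0 = -1 := by rw [hc_inv_app, zero_sub]
    have hc1 : c 1 = 2 := by rw [hc_app, one_add_one_eq_two]
    have hcinv1 : c⁻¹ 1 = 0 := by rw [hc_inv_app, sub_self]
    have hev0 : Even ((0 : Fin n) : ℕ) := by rw [hval0]; exact Even.zero
    have hodd1 : ¬ Even ((1 : Fin n) : ℕ) := by rw [hval1]; decide
    have hm0_0 : m0 0 = 1 := by rw [hm0_app, if_pos hev0, zero_add]
    have hm0_1 : m0 1 = 0 := by rw [hm0_app, if_neg hodd1, sub_self]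
    have hm1_0 : m1 0 = -1 := by rw [hm1_app, if_pos hev0, zero_sub]
    have hm1_1 : m1 1 = 2 := by rw [hm1_app, if_neg hodd1, one_add_one_eq_two]
    have d1 : c ≠ c⁻¹ := hdist _ _ 0 (by rw [hc0, hcinv0, hval1, hvalneg1]; omega)
    have d2 : c ≠ m0 := hdist _ _ 1 (by rw [hc1, hm0_1, hval2, hval0]; omega)
    have d3 : c ≠ m1 := hdist _ _ 0 (by rw [hc0, hm1_0, hval1, hvalneg1]; omega)
    have d4 : c⁻¹ ≠ m0 := hdist _ _ 0 (by rw [hcinv0, hm0_0, hval1, hvalneg1]; omega)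
    have d5 : c⁻¹ ≠ m1 := hdist _ _ 1 (by rw [hcinv1, hm1_1, hval2, hval0]; omega)
    have d6 : m0 ≠ m1 := hdist _ _ 0 (by rw [hm0_0, hm1_0, hval1, hvalneg1]; omega)
    -- restrict the sum
    have hGsum : ∑ σ : Equiv.Perm (Fin n), f σ = f c + (f c⁻¹ + (f m0 + f m1)) := by
      rw [← Finset.sum_subset
        (Finset.subset_univ ({c, c⁻¹, m0, m1} : Finset (Equiv.Perm (Fin n)))) ?_]
      · rw [Finset.sum_insert (by simp [d1, d2, d3]),
          Finset.sum_insert (by simp [d4, d5]),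
          Finset.sum_insert (by simp [d6]), Finset.sum_singleton]
      · intro σ _ hσ
        by_cases hg : ∀ i, σ i = i + 1 ∨ σ i = i - 1
        · exfalso
          apply hσ
          have hkey0 : ∀ a : Fin n, Even (a : ℕ) → (σ a = a + 1 ↔ σ 0 = 0 + 1) := by
            intro a ha
            obtain ⟨t, ht⟩ := ha
            exact hsame σ hg a 0 (Or.inl (by rw [hval0]; omega))
          have hkey1 : ∀ a : Fin n, ¬ Even (a : ℕ) → (σ a = a + 1 ↔ σ 1 = 1 + 1) := by
            intro a ha
            rcases Nat.even_or_odd (a : ℕ) with h | h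
            · exact absurd h ha
            · obtain ⟨t, ht⟩ := h
              exact hsame σ hg a 1 (Or.inl (by rw [hval1]; omega))
          simp only [Finset.mem_insert, Finset.mem_singleton]
          by_cases hP0 : σ 0 = 0 + 1 <;> by_cases hP1 : σ 1 = 1 + 1
          · left
            apply Equiv.ext; intro a
            rw [hc_app]
            rcases Nat.even_or_odd (a : ℕ) with h | h
            · exact (hkey0 a h).mpr hP0
            · exact (hkey1 a (by rw [Nat.even_iff, Nat.odd_iff] at *; omega)).mpr hP1
          · right; right; left
            apply Equiv.ext; intro a
            rw [hm0_app]
            by_cases h : Even (a : ℕ)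
            · rw [if_pos h]; exact (hkey0 a h).mpr hP0
            · rw [if_neg h]
              have : ¬ (σ a = a + 1) := fun hh => hP1 ((hkey1 a h).mp hh)
              rcases hg a with h' | h'
              · exact absurd h' this
              · exact h'
          · right; right; right
            apply Equiv.ext; intro a
            rw [hm1_app]
            by_cases h : Even (a : ℕ)
            · rw [if_pos h]
              have : ¬ (σ a = a + 1) := fun hh => hP0 ((hkey0 a h).mp hh)
              rcases hg a with h' | h'
              · exact absurd h' this
              · exact h'
            · rw [if_neg h]; exact (hkey1 a h).mpr hP1
          · right; left
            apply Equiv.ext; intro a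
            rw [hc_inv_app]
            have : ¬ (σ a = a + 1) := by
              rcases Nat.even_or_odd (a : ℕ) with h | h
              · exact fun hh => hP0 ((hkey0 a h).mp hh)
              · exact fun hh => hP1
                  ((hkey1 a (by rw [Nat.even_iff, Nat.odd_iff] at *; omega)).mp hh)
            rcases hg a with h' | h'
            · exact absurd h' this
            · exact h'
        · exact hvanish σ hg
    rw [hdet, hGsum, hfc, hfcinv, hfm0, hfm1, hq2]
    have h1n : (-1 : ℂ) ^ n = 1 := Even.neg_one_pow ⟨q, hq⟩
    rw [h1n]
    linear_combination ((-1 : ℂ) ^ (n + 1)) * hcos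
  · -- odd case
    have d1 : c ≠ c⁻¹ := by
      apply hdist _ _ 0
      rw [hc_app, hc_inv_app, zero_add, zero_sub, hval1, hvalneg1]; omega
    have hGsum : ∑ σ : Equiv.Perm (Fin n), f σ = f c + f c⁻¹ := by
      rw [← Finset.sum_subset
        (Finset.subset_univ ({c, c⁻¹} : Finset (Equiv.Perm (Fin n)))) ?_]
      · rw [Finset.sum_insert (by simp [d1]), Finset.sum_singleton]
      · intro σ _ hσ
        by_cases hg : ∀ i, σ i = i + 1 ∨ σ i = i - 1
        · exfalso
          apply hσ
          simp only [Finset.mem_insert, Finset.mem_singleton]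
          by_cases hP0 : σ 0 = 0 + 1
          · left
            apply Equiv.ext; intro a
            rw [hc_app]
            exact (hsame σ hg a 0 (Or.inr hno)).mpr hP0
          · right
            apply Equiv.ext; intro a
            rw [hc_inv_app]
            have : ¬ (σ a = a + 1) := fun hh => hP0 ((hsame σ hg a 0 (Or.inr hno)).mp hh)
            rcases hg a with h' | h'
            · exact absurd h' this
            · exact h'
        · exact hvanish σ hg
    rw [hdet, hGsum, hfc, hfcinv]
    have h1n : (-1 : ℂ) ^ n = -1 := Odd.neg_one_pow hno
    rw [h1n]
    linear_combination ((-1 : ℂ) ^ (n + 1)) * hcos
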